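/- Let L(f) = E_{g~D}[max(||f - g||_2 - m, 0)] where D has finite first moment and is not supported in any ball of radius m. If D is absolutely continuous with respect to Lebesgue measure on R^d (d ≥ 2), then L is strictly convex on R^d and hence has a unique global minimizer f̂. -/

import Mathlib

open MeasureTheory

section helpers

variable {E : Type*} [NormedAddCommGroup E] [NormedSpace ℝ E]

/-- Pointwise convexity of the hinge integrand. -/
lemma hinge_pt_le (m : ℝ) (x y g : E) {a b : ℝ} (ha : 0 ≤ a) (hb : 0 ≤ b)
    (hab : a + b = 1) :
    max (‖(a • x + b • y) - g‖ - m) 0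
      ≤ a * max (‖x - g‖ - m) 0 + b * max (‖y - g‖ - m) 0 := by
  have h1 : a • (x - g) + b • (y - g) = a • x + b • y - (a + b) • g := by module
  have key : ‖(a • x + b • y) - g‖ ≤ a * ‖x - g‖ + b * ‖y - g‖ := by
    rw [hab, one_smul] at h1
    calc ‖(a • x + b • y) - g‖ = ‖a • (x - g) + b • (y - g)‖ := by rw [h1]
      _ ≤ ‖a • (x - g)‖ + ‖b • (y - g)‖ := norm_add_le _ _
      _ = a * ‖x - g‖ + b * ‖y - g‖ := by
          rw [norm_smul, norm_smul, Real.norm_eq_abs, Real.norm_eq_abs,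
            abs_of_nonneg ha, abs_of_nonneg hb]
  have hx := le_max_left (‖x - g‖ - m) 0
  have hy := le_max_left (‖y - g‖ - m) 0
  have hx0 := le_max_right (‖x - g‖ - m) 0
  have hy0 := le_max_right (‖y - g‖ - m) 0
  have hmm : a * m + b * m = m := by rw [← add_mul, hab, one_mul]
  apply max_le
  · linarith [mul_le_mul_of_nonneg_left hx ha, mul_le_mul_of_nonneg_left hy hb]
  · have := mul_nonneg ha hx0
    have := mul_nonneg hb hy0
    linarith

/-- If `x - g` and `y - g` point in the same direction, `g` lies on the line through `x, y`. -/
lemma mem_line_of_sameRay {x y g : E} (hxy : x ≠ y) (hx : g ≠ x) (hy : g ≠ y)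
    {a b : ℝ} (ha : 0 < a) (hb : 0 < b)
    (h : SameRay ℝ (a • (x - g)) (b • (y - g))) :
    g ∈ affineSpan ℝ ({x, y} : Set E) := by
  have hu : a • (x - g) ≠ 0 := by
    simp [smul_eq_zero, ha.ne', sub_eq_zero, hx.symm]
  have hv : b • (y - g) ≠ 0 := by
    simp [smul_eq_zero, hb.ne', sub_eq_zero, hy.symm]
  obtain ⟨r₁, r₂, hr₁, hr₂, hr⟩ := h.exists_pos hu hv
  rw [smul_smul, smul_smul] at hr
  set s₁ := r₁ * a with hs₁
  set s₂ := r₂ * b with hs₂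
  have hs₁0 : 0 < s₁ := mul_pos hr₁ ha
  have hs₂0 : 0 < s₂ := mul_pos hr₂ hb
  have hc : s₂ - s₁ ≠ 0 := by
    intro hc
    have hseq : s₁ = s₂ := by linarith [sub_eq_zero.mp hc]
    rw [hseq] at hr
    have := smul_right_injective E hs₂0.ne' hr
    exact hxy (by rwa [sub_left_inj] at this)
  have key : (s₂ - s₁) • g = s₂ • y - s₁ • x := by
    have : s₁ • x - s₁ • g = s₂ • y - s₂ • g := by
      simpa [smul_sub] using hr
    linear_combination (norm := module) this
  have hg : g = ((s₂ - s₁)⁻¹ * s₂) • (y - x) + x := by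
    have h2 := congrArg (fun v => (s₂ - s₁)⁻¹ • v) key
    simp only [inv_smul_smul₀ hc] at h2
    rw [h2]
    match_scalars
    · field_simp
    · field_simp; ring
  rw [hg]
  simpa using smul_vsub_vadd_mem_affineSpan_pair ((s₂ - s₁)⁻¹ * s₂) x y

end helpers

/-- Pointwise strict convexity of the hinge integrand, away from the line through
`x, y` and away from the intersection of the two closed balls. -/
lemma hinge_pt_lt {E : Type*} [NormedAddCommGroup E] [InnerProductSpace ℝ E]
    {m : ℝ} {x y g : E} (hxy : x ≠ y)
    (hg : g ∉ affineSpan ℝ ({x, y} : Set E))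
    (hcap : m < ‖x - g‖ ∨ m < ‖y - g‖)
    {a b : ℝ} (ha : 0 < a) (hb : 0 < b) (hab : a + b = 1) :
    max (‖(a • x + b • y) - g‖ - m) 0
      < a * max (‖x - g‖ - m) 0 + b * max (‖y - g‖ - m) 0 := by
  have hgx : g ≠ x := fun h => hg (h ▸ left_mem_affineSpan_pair ℝ x y)
  have hgy : g ≠ y := fun h => hg (h ▸ right_mem_affineSpan_pair ℝ x y)
  have hns : ¬ SameRay ℝ (a • (x - g)) (b • (y - g)) := fun h =>
    hg (mem_line_of_sameRay hxy hgx hgy ha hb h)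
  have hlt : ‖(a • x + b • y) - g‖ < a * ‖x - g‖ + b * ‖y - g‖ := by
    have h1 : a • (x - g) + b • (y - g) = a • x + b • y - (a + b) • g := by module
    rw [hab, one_smul] at h1
    rw [← h1]
    calc ‖a • (x - g) + b • (y - g)‖ < ‖a • (x - g)‖ + ‖b • (y - g)‖ :=
          not_sameRay_iff_norm_add_lt.mp hns
      _ = a * ‖x - g‖ + b * ‖y - g‖ := by
          rw [norm_smul, norm_smul, Real.norm_eq_abs, Real.norm_eq_abs,
            abs_of_pos ha, abs_of_pos hb]
  have hxle := le_max_left (‖x - g‖ - m) 0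
  have hyle := le_max_left (‖y - g‖ - m) 0
  have hx0 := le_max_right (‖x - g‖ - m) 0
  have hy0 := le_max_right (‖y - g‖ - m) 0
  have hRpos : 0 < a * max (‖x - g‖ - m) 0 + b * max (‖y - g‖ - m) 0 := by
    rcases hcap with h | h
    · exact add_pos_of_pos_of_nonneg
        (mul_pos ha (by simp only [lt_max_iff]; left; linarith))
        (mul_nonneg hb.le hy0)
    · exact add_pos_of_nonneg_of_pos (mul_nonneg ha.le hx0)
        (mul_pos hb (by simp only [lt_max_iff]; left; linarith))
  refine max_lt ?_ hRpos
  have hmm : a * m + b * m = m := by rw [← add_mul, hab, one_mul]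
  linarith [mul_le_mul_of_nonneg_left hxle ha.le, mul_le_mul_of_nonneg_left hyle hb.le]

/-- Integrability of the hinge integrand. -/
lemma hinge_integrable {d : ℕ} (μ : Measure (EuclideanSpace ℝ (Fin d)))
    [IsProbabilityMeasure μ] (hmom : Integrable (fun g => ‖g‖) μ)
    {m : ℝ} (hm : 0 ≤ m) (f : EuclideanSpace ℝ (Fin d)) :
    Integrable (fun g => max (‖f - g‖ - m) 0) μ := by
  refine Integrable.mono' ((integrable_const ‖f‖).add hmom) ?_ ?_
  · exact (((continuous_const.sub continuous_id).norm.sub continuous_const).max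
      continuous_const).aestronglyMeasurable
  · filter_upwards with g
    simp only [Pi.add_apply]
    rw [Real.norm_eq_abs, abs_of_nonneg (le_max_right _ _)]
    have h1 := norm_sub_le f g
    have h2 : (0:ℝ) ≤ ‖f‖ + ‖g‖ := by positivity
    exact max_le (by linarith) h2

/-- If `D` is absolutely continuous on `ℝ^d` (`d ≥ 2`), has finite first moment, and is
not supported in any closed ball of radius `m`, then the expected hinge loss
`L(f) = E_{g~D}[max(‖f - g‖₂ - m, 0)]` is strictly convex and has a unique global
minimizer `f̂`. -/
theorem hinge_loss_strictly_convex_unique_min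
    {d : ℕ} (hd : 2 ≤ d)
    (μ : Measure (EuclideanSpace ℝ (Fin d))) [IsProbabilityMeasure μ]
    (hmom : Integrable (fun g => ‖g‖) μ)
    (m : ℝ) (hm : 0 ≤ m)
    (hac : μ ≪ (volume : Measure (EuclideanSpace ℝ (Fin d))))
    (hball : ¬ ∃ p : EuclideanSpace ℝ (Fin d), ∀ᵐ g ∂μ, g ∈ Metric.closedBall p m) :
    StrictConvexOn ℝ Set.univ
        (fun f : EuclideanSpace ℝ (Fin d) => ∫ g, max (‖f - g‖ - m) 0 ∂μ) ∧
    ∃! fhat : EuclideanSpace ℝ (Fin d), ∀ f : EuclideanSpace ℝ (Fin d),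
      (∫ g, max (‖fhat - g‖ - m) 0 ∂μ) ≤ ∫ g, max (‖f - g‖ - m) 0 ∂μ := by
  have hint : ∀ f, Integrable (fun g => max (‖f - g‖ - m) 0) μ :=
    hinge_integrable μ hmom hm
  set L : EuclideanSpace ℝ (Fin d) → ℝ :=
    fun f => ∫ g, max (‖f - g‖ - m) 0 ∂μ with hLdef
  -- strict convexity
  have hconv : StrictConvexOn ℝ Set.univ L := by
    refine ⟨convex_univ, ?_⟩
    intro x _ y _ hxy a b ha hb hab
    have hix := hint x
    have hiy := hint y
    have hit := hint (a • x + b • y)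
    set F : EuclideanSpace ℝ (Fin d) → ℝ :=
      fun g => a * max (‖x - g‖ - m) 0 + b * max (‖y - g‖ - m) 0
        - max (‖(a • x + b • y) - g‖ - m) 0 with hFdef
    have hA : Integrable (fun g => a * max (‖x - g‖ - m) 0) μ := hix.const_mul a
    have hB : Integrable (fun g => b * max (‖y - g‖ - m) 0) μ := hiy.const_mul b
    have hAB : Integrable
        (fun g => a * max (‖x - g‖ - m) 0 + b * max (‖y - g‖ - m) 0) μ := hA.add hB
    have hFint : Integrable F μ := hAB.sub hit
    have hF0 : ∀ g, 0 ≤ F g := fun g =>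
      sub_nonneg.mpr (hinge_pt_le m x y g ha.le hb.le hab)
    have hline_ne_top : affineSpan ℝ ({x, y} : Set (EuclideanSpace ℝ (Fin d))) ≠ ⊤ := by
      intro h
      have h1 : vectorSpan ℝ ({x, y} : Set (EuclideanSpace ℝ (Fin d))) = ⊤ := by
        rw [← direction_affineSpan, h, AffineSubspace.direction_top]
      have h2 : Module.finrank ℝ
          (vectorSpan ℝ ({x, y} : Set (EuclideanSpace ℝ (Fin d)))) = d := by
        rw [h1, finrank_top, finrank_euclideanSpace_fin]
      rw [vectorSpan_pair] at h2
      have h3 : Module.finrank ℝ (ℝ ∙ (x -ᵥ y)) = 1 :=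
        finrank_span_singleton (by simpa [vsub_eq_sub, sub_eq_zero] using hxy)
      rw [h3] at h2
      omega
    have hline0 : μ (affineSpan ℝ ({x, y} : Set (EuclideanSpace ℝ (Fin d))) :
        Set (EuclideanSpace ℝ (Fin d))) = 0 :=
      hac (Measure.addHaar_affineSubspace volume _ hline_ne_top)
    have hsupp : 0 < μ (Function.support F) := by
      rw [pos_iff_ne_zero]
      intro h0
      have hae1 : ∀ᵐ g ∂μ, F g = 0 := by
        have := measure_eq_zero_iff_ae_notMem.mp h0
        filter_upwards [this] with g hg
        simpa [Function.mem_support, not_not] using hg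
      have hae2 : ∀ᵐ g ∂μ, g ∉ (affineSpan ℝ ({x, y} : Set (EuclideanSpace ℝ (Fin d))) :
          Set (EuclideanSpace ℝ (Fin d))) := measure_eq_zero_iff_ae_notMem.mp hline0
      refine hball ⟨x, ?_⟩
      filter_upwards [hae1, hae2] with g hg1 hg2
      rw [Metric.mem_closedBall, dist_comm, dist_eq_norm]
      by_contra hgt
      push_neg at hgt
      have hstrict := hinge_pt_lt hxy hg2 (Or.inl hgt) ha hb hab
      simp only [hFdef] at hg1
      linarith
    have hpos : 0 < ∫ g, F g ∂μ :=
      (integral_pos_iff_support_of_nonneg_ae (ae_of_all _ hF0) hFint).2 hsupp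
    have heq : ∫ g, F g ∂μ = a * L x + b * L y - L (a • x + b • y) := by
      simp only [hFdef, hLdef]
      rw [integral_sub hAB hit, integral_add hA hB,
        integral_const_mul, integral_const_mul]
    rw [heq] at hpos
    simp only [smul_eq_mul]
    linarith
  refine ⟨hconv, ?_⟩
  -- continuity via Lipschitz
  have hlip : LipschitzWith 1 L := by
    refine LipschitzWith.of_dist_le_mul fun f f' => ?_
    rw [Real.dist_eq, NNReal.coe_one, one_mul, dist_eq_norm]
    have hptw : ∀ g : EuclideanSpace ℝ (Fin d),
        |max (‖f - g‖ - m) 0 - max (‖f' - g‖ - m) 0| ≤ ‖f - f'‖ := by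
      intro g
      refine (abs_max_sub_max_le_abs _ _ _).trans ?_
      have he : ‖f - g‖ - m - (‖f' - g‖ - m) = ‖f - g‖ - ‖f' - g‖ := by ring
      rw [he]
      have := abs_norm_sub_norm_le (f - g) (f' - g)
      rwa [sub_sub_sub_cancel_right] at this
    calc |L f - L f'|
        = |∫ g, (max (‖f - g‖ - m) 0 - max (‖f' - g‖ - m) 0) ∂μ| := by
          rw [hLdef]; rw [integral_sub (hint f) (hint f')]
      _ ≤ ∫ g, |max (‖f - g‖ - m) 0 - max (‖f' - g‖ - m) 0| ∂μ := by
          simpa [Real.norm_eq_abs] using norm_integral_le_integral_norm (μ := μ)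
            (fun g => max (‖f - g‖ - m) 0 - max (‖f' - g‖ - m) 0)
      _ ≤ ∫ _g, ‖f - f'‖ ∂μ :=
          integral_mono (((hint f).sub (hint f')).abs) (integrable_const _)
            hptw
      _ = ‖f - f'‖ := by simp [measure_univ]
  have hcont : Continuous L := hlip.continuous
  -- coercivity
  have hlow : ∀ f, ‖f‖ - (∫ g, ‖g‖ ∂μ) - m ≤ L f := by
    intro f
    have hint1 : Integrable (fun g => ‖f - g‖) μ := by
      refine Integrable.mono' ((integrable_const ‖f‖).add hmom) ?_ ?_
      · exact ((continuous_const.sub continuous_id).norm).aestronglyMeasurable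
      · filter_upwards with g
        simp only [Pi.add_apply]
        rw [Real.norm_eq_abs, abs_of_nonneg (norm_nonneg _)]
        exact norm_sub_le f g
    have h1 : ∫ g, (‖f‖ - ‖g‖) ∂μ ≤ ∫ g, ‖f - g‖ ∂μ :=
      integral_mono ((integrable_const ‖f‖).sub hmom) hint1
        (fun g => norm_sub_norm_le f g)
    have h2 : ∫ g, (‖f - g‖ - m) ∂μ ≤ L f :=
      integral_mono (hint1.sub (integrable_const m)) (hint f)
        (fun g => le_max_left _ _)
    rw [integral_sub (integrable_const ‖f‖) hmom, integral_const, probReal_univ,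
      smul_eq_mul, one_mul] at h1
    rw [integral_sub hint1 (integrable_const m), integral_const, probReal_univ,
      smul_eq_mul, one_mul] at h2
    linarith
  -- existence of a minimizer on a big ball
  set C := (∫ g, ‖g‖ ∂μ) + m with hC
  have hC0 : 0 ≤ C := add_nonneg (integral_nonneg fun g => norm_nonneg g) hm
  set R := |L 0| + C + 1 with hR
  have hR0 : 0 ≤ R := by positivity
  obtain ⟨fhat, hfK, hmin⟩ :=
    (isCompact_closedBall (0 : EuclideanSpace ℝ (Fin d)) R).exists_isMinOn
      ⟨0, Metric.mem_closedBall_self hR0⟩ hcont.continuousOn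
  have hglobal : ∀ f, L fhat ≤ L f := by
    intro f
    by_cases hf : f ∈ Metric.closedBall (0 : EuclideanSpace ℝ (Fin d)) R
    · exact hmin hf
    · have hfR : R < ‖f‖ := by
        rw [Metric.mem_closedBall, dist_zero_right, not_le] at hf
        exact hf
      have h1 := hlow f
      have h2 : L fhat ≤ L 0 := hmin (Metric.mem_closedBall_self hR0)
      have h3 : L 0 ≤ |L 0| := le_abs_self _
      have : ‖f‖ - (∫ g, ‖g‖ ∂μ) - m = ‖f‖ - C := by rw [hC]; ring
      linarith
  refine ⟨fhat, hglobal, ?_⟩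
  intro y hy
  by_contra hne
  have hLy : L y = L fhat := le_antisymm (hy fhat) (hglobal y)
  have hmid := hconv.2 (Set.mem_univ y) (Set.mem_univ fhat) hne
    (by norm_num : (0:ℝ) < 1/2) (by norm_num : (0:ℝ) < 1/2) (by norm_num)
  have hge := hglobal ((1/2 : ℝ) • y + (1/2 : ℝ) • fhat)
  simp only [smul_eq_mul] at hmid
  linarith
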